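/- If f, K_i (i=1,…,n) are continuously differentiable, the functions α_i satisfy α_0(t)≡0, α_n(t)≡t, α_i(0)=0, and are C¹, and x is a continuous solution of Σ_{i=1}^n ∫_{α_{i-1}(t)}^{α_i(t)} K_i(t,s) x(s) ds = f(t) on [0,T], then differentiating at t=0 yields f'(0) = x(0) · Σ_{i=1}^n K_i(0,0)(α_i'(0) − α_{i-1}'(0)); in particular, if Σ_{i=1}^n K_i(0,0)(α_i'(0) − α_{i-1}'(0)) ≠ 0 then x(0) = f'(0) / Σ_{i=1}^n K_i(0,0)(α_i'(0) − α_{i-1}'(0)). -/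

import Mathlib

open intervalIntegral Set Filter Asymptotics

lemma volterra_key (φ : ℝ → ℝ → ℝ) (hφ : Continuous fun p : ℝ × ℝ => φ p.1 p.2)
    (a b : ℝ → ℝ) (a' b' : ℝ) (ha0 : a 0 = 0) (hb0 : b 0 = 0)
    (ha : HasDerivAt a a' 0) (hb : HasDerivAt b b' 0) :
    HasDerivAt (fun t => ∫ s in a t..b t, φ t s) (φ 0 0 * (b' - a')) 0 := by
  set c := φ 0 0 with hc
  have hφt : ∀ t : ℝ, Continuous fun s => φ t s := fun t =>
    hφ.comp (continuous_const.prodMk continuous_id)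
  have hlin : HasDerivAt (fun t => c * (b t - a t)) (c * (b' - a')) 0 :=
    (hb.sub ha).const_mul c
  have hrepr : ∀ t : ℝ, (∫ s in a t..b t, φ t s) - c * (b t - a t)
      = ∫ s in a t..b t, (φ t s - c) := by
    intro t
    rw [intervalIntegral.integral_sub ((hφt t).intervalIntegrable _ _)
      (intervalIntegrable_const), intervalIntegral.integral_const]
    ring_nf
  have hO : (fun t : ℝ => b t - a t) =O[nhds 0] (fun t : ℝ => t) := by
    have := (hb.sub ha).hasFDerivAt.isBigO_sub
    simpa [ha0, hb0] using this.trans (isBigO_refl _ _)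
  have hcontba : ContinuousAt (fun t => max |a t| |b t|) 0 :=
    ((ha.differentiableAt.continuousAt.abs).max
      (hb.differentiableAt.continuousAt.abs))
  have hlo : (fun t : ℝ => ∫ s in a t..b t, (φ t s - c)) =o[nhds 0]
      (fun t : ℝ => b t - a t) := by
    rw [isLittleO_iff]
    intro C hC
    have hcont : ContinuousAt (fun p : ℝ × ℝ => φ p.1 p.2) (0, 0) := hφ.continuousAt
    rw [Metric.continuousAt_iff] at hcont
    obtain ⟨δ, hδpos, hδ⟩ := hcont C hC
    have h1 : ∀ᶠ t : ℝ in nhds 0, max |a t| |b t| < δ := by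
      have ht : Filter.Tendsto (fun t => max |a t| |b t|) (nhds 0) (nhds 0) := by
        have h0 : max |a 0| |b 0| = 0 := by simp [ha0, hb0]
        simpa [ContinuousAt, h0] using hcontba
      exact ht.eventually (eventually_lt_nhds hδpos)
    have h2 : ∀ᶠ t : ℝ in nhds 0, |t| < δ := by
      have : ContinuousAt (fun t : ℝ => |t|) 0 := continuous_abs.continuousAt
      filter_upwards [Metric.ball_mem_nhds (0:ℝ) hδpos] with t ht
      simpa [Real.dist_eq] using ht
    filter_upwards [h1, h2] with t ht hts
    have hbound : ∀ s ∈ Set.uIoc (a t) (b t), ‖φ t s - c‖ ≤ C := by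
      intro s hs
      have hsabs : |s| < δ := by
        rcases Set.mem_uIoc.mp hs with ⟨h1', h2'⟩ | ⟨h1', h2'⟩ <;>
        · rw [abs_lt]
          constructor <;> nlinarith [le_max_left |a t| |b t|, le_max_right |a t| |b t|,
            neg_abs_le (a t), le_abs_self (a t), neg_abs_le (b t), le_abs_self (b t)]
      have hd : dist ((t, s) : ℝ × ℝ) (0, 0) < δ := by
        rw [Prod.dist_eq]
        simp only [Real.dist_eq, sub_zero]
        exact max_lt hts hsabs
      exact le_of_lt (hδ hd)
    calc ‖∫ s in a t..b t, (φ t s - c)‖ ≤ C * |b t - a t| :=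
          intervalIntegral.norm_integral_le_of_norm_le_const hbound
      _ = C * ‖b t - a t‖ := by rw [Real.norm_eq_abs]
  have hmain : HasDerivAt (fun t => (∫ s in a t..b t, φ t s) - c * (b t - a t)) 0 0 := by
    rw [hasDerivAt_iff_isLittleO]
    have h2 := hlo.trans_isBigO hO
    simp only [← hrepr] at h2
    simpa [ha0, hb0] using h2
  have := hmain.add hlin
  simp only [zero_add] at this
  convert this using 1
  · rfl
  · rfl
  · ext t
    simp only [Pi.add_apply]
    ring


/-- Differentiating the first-kind Volterra equation with piecewise kernel at `t = 0`
yields `f'(0) = x(0) · Σ K_i(0,0)(α_i'(0) − α_{i-1}'(0))`, and in particular a formula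
for `x(0)` when the sum is nonzero. -/
theorem volterra_first_kind_x0
    (n : ℕ) (hn : 1 ≤ n) (T : ℝ) (hT : 0 < T)
    (K : ℕ → ℝ → ℝ → ℝ) (α : ℕ → ℝ → ℝ) (f x : ℝ → ℝ)
    (hf : ContDiff ℝ 1 f)
    (hK : ∀ i, ContDiff ℝ 1 (fun p : ℝ × ℝ => K i p.1 p.2))
    (hα0 : ∀ t, α 0 t = 0) (hαn : ∀ t, α n t = t)
    (hαzero : ∀ i ≤ n, α i 0 = 0)
    (hαC1 : ∀ i ≤ n, ContDiff ℝ 1 (α i))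
    (hx : Continuous x)
    (heq : ∀ t ∈ Icc (0:ℝ) T,
      (∑ i ∈ Finset.range n, ∫ s in α i t..α (i+1) t, K (i+1) t s * x s) = f t) :
    deriv f 0 = x 0 * ∑ i ∈ Finset.range n,
        K (i+1) 0 0 * (deriv (α (i+1)) 0 - deriv (α i) 0) ∧
    ((∑ i ∈ Finset.range n, K (i+1) 0 0 * (deriv (α (i+1)) 0 - deriv (α i) 0)) ≠ 0 →
      x 0 = deriv f 0 /
        ∑ i ∈ Finset.range n, K (i+1) 0 0 * (deriv (α (i+1)) 0 - deriv (α i) 0)) := by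
  set S := ∑ i ∈ Finset.range n, K (i+1) 0 0 * (deriv (α (i+1)) 0 - deriv (α i) 0) with hS
  have hmain : deriv f 0 = x 0 * S := by
    -- derivative of each summand
    have hterm : ∀ i ∈ Finset.range n,
        HasDerivAt (fun t => ∫ s in α i t..α (i+1) t, K (i+1) t s * x s)
          (K (i+1) 0 0 * x 0 * (deriv (α (i+1)) 0 - deriv (α i) 0)) 0 := by
      intro i hi
      have hin : i ≤ n := le_of_lt (Finset.mem_range.mp hi)
      have hin1 : i + 1 ≤ n := Finset.mem_range.mp hi
      have ha : HasDerivAt (α i) (deriv (α i) 0) 0 :=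
        (((hαC1 i hin).differentiable one_ne_zero) 0).hasDerivAt
      have hb : HasDerivAt (α (i+1)) (deriv (α (i+1)) 0) 0 :=
        (((hαC1 (i+1) hin1).differentiable one_ne_zero) 0).hasDerivAt
      have hφ : Continuous fun p : ℝ × ℝ => K (i+1) p.1 p.2 * x p.2 :=
        (hK (i+1)).continuous.mul (hx.comp continuous_snd)
      exact volterra_key (fun t s => K (i+1) t s * x s) hφ (α i) (α (i+1)) _ _
        (hαzero i hin) (hαzero (i+1) hin1) ha hb
    have hg : HasDerivAt (fun t => ∑ i ∈ Finset.range n,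
        ∫ s in α i t..α (i+1) t, K (i+1) t s * x s) (x 0 * S) 0 := by
      have := HasDerivAt.fun_sum hterm
      convert this using 1
      · rfl
      · rfl
      rw [hS, Finset.mul_sum]
      apply Finset.sum_congr rfl
      intro i _
      ring
    have hmem : Icc (0:ℝ) T ∈ nhdsWithin (0:ℝ) (Ici 0) :=
      Icc_mem_nhdsGE_of_mem (by exact ⟨le_refl _, hT⟩)
    have hfw : HasDerivWithinAt f (x 0 * S) (Ici 0) 0 := by
      refine (hg.hasDerivWithinAt).congr_of_eventuallyEq ?_ ?_
      · filter_upwards [hmem] with t ht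
        exact (heq t ht).symm
      · exact (heq 0 ⟨le_refl _, le_of_lt hT⟩).symm
    have hfd : HasDerivWithinAt f (deriv f 0) (Ici 0) 0 :=
      ((hf.differentiable one_ne_zero) 0).hasDerivAt.hasDerivWithinAt
    have hu : UniqueDiffWithinAt ℝ (Ici (0:ℝ)) 0 :=
      uniqueDiffOn_Ici 0 0 self_mem_Ici
    exact (hfd.derivWithin hu).symm.trans (hfw.derivWithin hu)
  refine ⟨hmain, fun hSne => ?_⟩
  rw [hmain]
  field_simp
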